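/- Let K be an infinite field and let M be a matroid on a finite ground set E that is representable over K, with rank at least 1. Then the truncation T(M) of M is also representable over K. -/

import Mathlib

universe u

/-- A matroid presented as a finite ground set together with a rank function
satisfying the rank axioms (R1), (R2), (R3). -/
structure RankMatroid (α : Type) [DecidableEq α] where
  E : Finset α
  r : Finset α → ℕ
  r_le_card : ∀ X ⊆ E, r X ≤ X.card
  r_mono : ∀ X Y : Finset α, X ⊆ Y → Y ⊆ E → r X ≤ r Y
  r_submod : ∀ X Y : Finset α, X ⊆ E → Y ⊆ E →
    r (X ∪ Y) + r (X ∩ Y) ≤ r X + r Y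

namespace RankMatroid

variable {α : Type} [DecidableEq α]

/-- A set is independent if its rank equals its cardinality. -/
def Indep (M : RankMatroid α) (X : Finset α) : Prop :=
  X ⊆ M.E ∧ M.r X = X.card

/-- A base is a maximal independent set. -/
def Base (M : RankMatroid α) (B : Finset α) : Prop :=
  M.Indep B ∧ M.r B = M.r M.E

/-- A dependent set. -/
def Dep (M : RankMatroid α) (X : Finset α) : Prop :=
  X ⊆ M.E ∧ M.r X ≠ X.card

/-- A circuit is a minimal dependent set. -/
def Circuit (M : RankMatroid α) (C : Finset α) : Prop :=
  M.Dep C ∧ ∀ X ⊂ C, M.Indep X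

/-- A spanning set. -/
def Spanning (M : RankMatroid α) (X : Finset α) : Prop :=
  X ⊆ M.E ∧ M.r X = M.r M.E

/-- A flat. -/
def Flat (M : RankMatroid α) (X : Finset α) : Prop :=
  X ⊆ M.E ∧ ∀ e ∈ M.E, e ∉ X → M.r X < M.r (insert e X)

/-- A hyperplane is a flat of rank `r(E) - 1`. -/
def Hyperplane (M : RankMatroid α) (X : Finset α) : Prop :=
  M.Flat X ∧ M.r X + 1 = M.r M.E

/-- `M` is representable over the field `F`: there is a map from the ground type to
an `F`-vector space under which the rank of every subset of the ground set equals the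
dimension of the span of its image. -/
def RepOver (M : RankMatroid α) (F : Type u) [Field F] : Prop :=
  ∃ (V : Type u) (_ : AddCommGroup V) (_ : Module F V) (φ : α → V),
    ∀ X ⊆ M.E, M.r X = Module.finrank F (Submodule.span F (φ '' (X : Set α)))

/-- `M` is representable if it is representable over at least one field. -/
def Representable (M : RankMatroid α) : Prop :=
  ∃ (F : Type) (_ : Field F), M.RepOver F

end RankMatroid

section Aux

variable {α : Type} [DecidableEq α]

lemma RankMatroid.r_empty (N : RankMatroid α) : N.r ∅ = 0 :=
  Nat.le_zero.mp (by simpa using N.r_le_card ∅ (Finset.empty_subset _))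

lemma RankMatroid.r_insert_le (N : RankMatroid α) {X : Finset α} {e : α}
    (h : insert e X ⊆ N.E) : N.r (insert e X) ≤ N.r X + 1 := by
  by_cases he : e ∈ X
  · rw [Finset.insert_eq_self.mpr he]; omega
  · have hX : X ⊆ N.E := (Finset.subset_insert e X).trans h
    have hee : ({e} : Finset α) ⊆ N.E :=
      Finset.singleton_subset_iff.mpr (h (Finset.mem_insert_self e X))
    have hs := N.r_submod X {e} hX hee
    have h1 : X ∪ {e} = insert e X := by
      ext x; simp [Finset.mem_insert, or_comm]
    have h2 : X ∩ {e} = ∅ := by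
      ext x; simp only [Finset.mem_inter, Finset.mem_singleton, Finset.notMem_empty,
        iff_false]
      rintro ⟨hx, rfl⟩; exact he hx
    have h3 : N.r {e} ≤ 1 := by simpa using N.r_le_card {e} hee
    rw [h1, h2, N.r_empty] at hs
    omega

lemma RankMatroid.r_union_le (N : RankMatroid α) (D : Finset α) :
    ∀ Y : Finset α, Y ∪ D ⊆ N.E → N.r (Y ∪ D) ≤ N.r Y + D.card := by
  induction D using Finset.induction_on with
  | empty => intro Y hY; simp
  | @insert a D' ha ih =>
    intro Y hY
    have h1 : Y ∪ insert a D' = insert a (Y ∪ D') := by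
      ext x; simp [Finset.mem_insert, Finset.mem_union]
    have h2 : Y ∪ D' ⊆ N.E := by
      intro x hx
      exact hY (by simp only [Finset.mem_union, Finset.mem_insert] at hx ⊢; tauto)
    have h3 : insert a (Y ∪ D') ⊆ N.E := by rw [← h1]; exact hY
    calc N.r (Y ∪ insert a D') = N.r (insert a (Y ∪ D')) := by rw [h1]
      _ ≤ N.r (Y ∪ D') + 1 := N.r_insert_le h3
      _ ≤ N.r Y + D'.card + 1 := by have := ih Y h2; omega
      _ = N.r Y + (insert a D').card := by rw [Finset.card_insert_of_notMem ha]; omega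

lemma RankMatroid.indep_subset (N : RankMatroid α) {X Y : Finset α}
    (hX : N.Indep X) (hYX : Y ⊆ X) : N.Indep Y := by
  obtain ⟨hXE, hXr⟩ := hX
  have hYE : Y ⊆ N.E := hYX.trans hXE
  have hYD : Y ∪ (X \ Y) = X := Finset.union_sdiff_of_subset hYX
  have h1 : N.r X ≤ N.r Y + (X \ Y).card := by
    have := N.r_union_le (X \ Y) Y (by rw [hYD]; exact hXE)
    rwa [hYD] at this
  have h2 : (X \ Y).card = X.card - Y.card := Finset.card_sdiff_of_subset hYX
  have h3 : Y.card ≤ X.card := Finset.card_le_card hYX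
  have h4 : N.r Y ≤ Y.card := N.r_le_card Y hYE
  exact ⟨hYE, by omega⟩

lemma RankMatroid.exists_indep (N : RankMatroid α) :
    ∀ X : Finset α, X ⊆ N.E → ∃ I ⊆ X, N.Indep I ∧ I.card = N.r X := by
  intro X
  induction X using Finset.strongInduction with
  | _ X ih =>
    intro hXE
    rcases Finset.eq_empty_or_nonempty X with rfl | ⟨e, he⟩
    · exact ⟨∅, Finset.Subset.refl _, ⟨Finset.empty_subset _, by simp [N.r_empty]⟩,
        by simp [N.r_empty]⟩
    · set Y := X.erase e with hY
      have hYX : Y ⊂ X := Finset.erase_ssubset he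
      have hYE : Y ⊆ N.E := hYX.subset.trans hXE
      have hXeq : insert e Y = X := Finset.insert_erase he
      have hle : N.r Y ≤ N.r X := N.r_mono Y X hYX.subset hXE
      have hge : N.r X ≤ N.r Y + 1 := by
        rw [← hXeq]; exact N.r_insert_le (by rw [hXeq]; exact hXE)
      obtain ⟨I, hIY, hIind, hIcard⟩ := ih Y hYX hYE
      by_cases hcase : N.r X = N.r Y
      · exact ⟨I, hIY.trans hYX.subset, hIind, by omega⟩
      · have hrx : N.r X = N.r Y + 1 := by omega
        have heI : e ∉ I := fun h => (Finset.notMem_erase e X) (hIY h)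
        refine ⟨insert e I, ?_, ⟨?_, ?_⟩, ?_⟩
        · rw [← hXeq]; exact Finset.insert_subset_insert e hIY
        · rw [← hXeq] at hXE
          exact (Finset.insert_subset_insert e hIY).trans hXE
        all_goals {
          have hcard : (insert e I).card = I.card + 1 :=
            Finset.card_insert_of_notMem heI
          have hsubE : insert e I ⊆ N.E := by
            rw [← hXeq] at hXE
            exact (Finset.insert_subset_insert e hIY).trans hXE
          have hub : N.r (insert e I) ≤ I.card + 1 := by
            have := N.r_le_card (insert e I) hsubE; omega
          have hunion : insert e I ∪ Y = X := by
            rw [← hXeq]; ext x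
            simp only [Finset.mem_union, Finset.mem_insert]
            constructor
            · rintro (⟨rfl | hx⟩ | hx)
              · exact Or.inl rfl
              · exact Or.inr (hIY hx)
              · exact Or.inr hx
            · rintro (rfl | hx)
              · exact Or.inl (Or.inl rfl)
              · exact Or.inr hx
          have hinter : insert e I ∩ Y = I := by
            ext x
            simp only [Finset.mem_inter, Finset.mem_insert]
            constructor
            · rintro ⟨hxe | hx, hy⟩
              · rw [hxe] at hy; exact absurd hy (Finset.notMem_erase e X)
              · exact hx
            · intro hx; exact ⟨Or.inr hx, hIY hx⟩
          have hsm := N.r_submod (insert e I) Y hsubE hYE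
          rw [hunion, hinter] at hsm
          have hlb : I.card + 1 ≤ N.r (insert e I) := by
            have h5 := hIind.2
            omega
          omega }

/-- rank of the truncation. -/
lemma trunc_r {M T : RankMatroid α} (hr : 1 ≤ M.r M.E) (hTE : T.E = M.E)
    (hTI : ∀ X : Finset α, T.Indep X ↔ (M.Indep X ∧ X.card ≤ M.r M.E - 1))
    {X : Finset α} (hX : X ⊆ M.E) : T.r X = min (M.r X) (M.r M.E - 1) := by
  have hXT : X ⊆ T.E := by rw [hTE]; exact hX
  apply le_antisymm
  · obtain ⟨I, hIX, hIind, hIcard⟩ := T.exists_indep X hXT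
    obtain ⟨hMind, hle⟩ := (hTI I).mp hIind
    have h1 : M.r I ≤ M.r X := M.r_mono I X hIX hX
    have h2 := hMind.2
    omega
  · obtain ⟨I, hIX, hIind, hIcard⟩ := M.exists_indep X hX
    set k := min (M.r X) (M.r M.E - 1) with hk
    have hkI : k ≤ I.card := by omega
    obtain ⟨I', hI'I, hI'card⟩ := Finset.exists_subset_card_eq hkI
    have hI'ind : M.Indep I' := M.indep_subset hIind hI'I
    have hTI' : T.Indep I' := (hTI I').mpr ⟨hI'ind, by omega⟩
    have h1 : T.r I' ≤ T.r X := T.r_mono I' X (hI'I.trans hIX) hXT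
    have h2 : T.r I' = I'.card := hTI'.2
    omega

end Aux

/-- The truncation of a matroid that is representable over an infinite field `K` is again
representable over `K`.  Here the truncation `T` is specified by its independent sets:
the independent sets of `M` of cardinality at most `r(E) - 1`. -/
theorem truncation_representable {α : Type} [DecidableEq α]
    (K : Type u) [Field K] (hK : Infinite K)
    (M : RankMatroid α) (hM : M.RepOver K) (hr : 1 ≤ M.r M.E)
    (T : RankMatroid α) (hTE : T.E = M.E)
    (hTI : ∀ X : Finset α, T.Indep X ↔ (M.Indep X ∧ X.card ≤ M.r M.E - 1)) :
    T.RepOver K := by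
  classical
  obtain ⟨V, _, _, φ, hφ⟩ := hM
  set rE := M.r M.E with hrE
  set W : Submodule K V := Submodule.span K (φ '' (M.E : Set α)) with hW
  haveI : FiniteDimensional K W :=
    FiniteDimensional.span_of_finite K (M.E.finite_toSet.image φ)
  have hWrank : Module.finrank K W = rE := (hφ M.E (Finset.Subset.refl _)).symm
  set s : Finset (Finset α) := M.E.powerset.filter (fun X => M.r X ≤ rE - 1) with hs
  -- find a vector in W avoiding all low-rank spans
  have hdim : ∀ X ∈ s, ¬ (W ≤ Submodule.span K (φ '' (X : Set α))) := by
    intro X hXs hle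
    rw [hs, Finset.mem_filter, Finset.mem_powerset] at hXs
    haveI : FiniteDimensional K (Submodule.span K (φ '' (X : Set α))) :=
      FiniteDimensional.span_of_finite K (X.finite_toSet.image φ)
    have h1 : Module.finrank K W ≤
        Module.finrank K (Submodule.span K (φ '' (X : Set α))) :=
      Submodule.finrank_mono hle
    have h2 : Module.finrank K (Submodule.span K (φ '' (X : Set α))) = M.r X :=
      (hφ X hXs.1).symm
    omega
  have hex : ∃ w ∈ W, ∀ X ∈ s, w ∉ Submodule.span K (φ '' (X : Set α)) := by
    by_contra hcon
    push_neg at hcon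
    set p : {X // X ∈ s} → Subspace K W :=
      fun X => Submodule.comap W.subtype (Submodule.span K (φ '' ((X : Finset α) : Set α)))
      with hp
    have hcovers : ⋃ i, ((p i : Subspace K W) : Set W) = Set.univ := by
      apply Set.eq_univ_of_forall
      intro w
      obtain ⟨X, hXs, hw⟩ := hcon w.1 w.2
      exact Set.mem_iUnion.mpr ⟨⟨X, hXs⟩, hw⟩
    obtain ⟨⟨X, hXs⟩, hXtop⟩ := Subspace.exists_eq_top_of_iUnion_eq_univ hcovers
    apply hdim X hXs
    intro v hv
    have : (⟨v, hv⟩ : W) ∈ p ⟨X, hXs⟩ := by rw [hXtop]; trivial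
    exact this
  obtain ⟨w, hwW, hwav⟩ := hex
  have hempty : (∅ : Finset α) ∈ s := by
    rw [hs, Finset.mem_filter, Finset.mem_powerset]
    refine ⟨Finset.empty_subset _, ?_⟩
    rw [M.r_empty]; omega
  have hw0 : w ≠ 0 := by
    intro h
    apply hwav ∅ hempty
    rw [h]
    simp
  set L : Submodule K V := K ∙ w with hL
  refine ⟨V ⧸ L, inferInstance, inferInstance, fun a => L.mkQ (φ a), ?_⟩
  intro X hXT
  have hX : X ⊆ M.E := by rw [hTE] at hXT; exact hXT
  set U : Submodule K V := Submodule.span K (φ '' (X : Set α)) with hU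
  haveI : FiniteDimensional K U :=
    FiniteDimensional.span_of_finite K (X.finite_toSet.image φ)
  have hUr : Module.finrank K U = M.r X := (hφ X hX).symm
  have hmap : Submodule.span K ((fun a => L.mkQ (φ a)) '' (X : Set α))
      = Submodule.map L.mkQ U := by
    rw [hU, Submodule.map_span, Set.image_image]
  have hrn := LinearMap.finrank_range_add_finrank_ker (L.mkQ.domRestrict U)
  rw [LinearMap.range_domRestrict, LinearMap.ker_domRestrict, Submodule.ker_mkQ] at hrn
  have hTr : T.r X = min (M.r X) (rE - 1) := trunc_r hr hTE hTI hX
  by_cases hcase : M.r X ≤ rE - 1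
  · -- w ∉ U, so the quotient map is injective on U
    have hXs : X ∈ s := by
      rw [hs, Finset.mem_filter, Finset.mem_powerset]; exact ⟨hX, hcase⟩
    have hwU : w ∉ U := hwav X hXs
    have hker : Submodule.comap U.subtype L = ⊥ := by
      rw [Submodule.eq_bot_iff]
      rintro ⟨u, hu⟩ hmem
      simp only [Submodule.mem_comap, Submodule.coe_subtype] at hmem
      rw [hL, Submodule.mem_span_singleton] at hmem
      obtain ⟨c, hc⟩ := hmem
      rcases eq_or_ne c 0 with rfl | hcne
      · simp only [zero_smul] at hc
        exact Subtype.ext hc.symm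
      · exfalso
        apply hwU
        have : w = c⁻¹ • u := by rw [← hc, smul_smul, inv_mul_cancel₀ hcne, one_smul]
        rw [this]
        exact U.smul_mem _ hu
    rw [hker, finrank_bot, add_zero] at hrn
    rw [hTr, hmap, hrn, hUr, min_eq_left hcase]
  · -- M.r X = rE, so U = W and w ∈ U
    have hXle : M.r X ≤ rE := M.r_mono X M.E hX (Finset.Subset.refl _)
    have hXeq : M.r X = rE := by omega
    have hUW : U ≤ W := Submodule.span_mono (Set.image_mono (by exact_mod_cast hX))
    have hUeqW : U = W := by
      apply Submodule.eq_of_le_of_finrank_le hUW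
      rw [hWrank, hUr, hXeq]
    have hwU : w ∈ U := by rw [hUeqW]; exact hwW
    have hLU : L ≤ U := by
      rw [hL]
      exact (Submodule.span_singleton_le_iff_mem w U).mpr hwU
    have hkerL : Module.finrank K (Submodule.comap U.subtype L) = 1 := by
      rw [LinearEquiv.finrank_eq (Submodule.comapSubtypeEquivOfLe hLU)]
      exact finrank_span_singleton hw0
    rw [hkerL] at hrn
    rw [hTr, hmap, min_eq_right (by omega : rE - 1 ≤ M.r X)]
    omega
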